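/- Suppose a binary classification problem satisfies the Tsybakov noise condition: there exist a ∈ (0,1) and B > 0 such that Pr_x[|η(x) − 1/2| < 2t] ≤ B·t^{a/(1−a)} for all t ≥ 0. Then for every classifier g, Pr_x[g(x) ≠ g*(x)] ≤ C_{a,B} · (L(g) − L(g*))^a, where C_{a,B} = B^{1−a} / ((1−a)^{1−a} a^a). -/

import Mathlib

open MeasureTheory

/-- Under the Tsybakov noise condition with parameters `a ∈ (0,1)` and `B > 0`
(`Pr_x[|η(x) − 1/2| < 2t] ≤ B·t^{a/(1−a)}` for all `t ≥ 0`), every classifier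
`g` satisfies `Pr_x[g(x) ≠ g*(x)] ≤ C_{a,B}·(L(g) − L(g*))^a`, where
`C_{a,B} = B^{1−a}/((1−a)^{1−a} a^a)`, `g*(x) = 1{η(x) ≥ 1/2}` is the Bayes
classifier and `L(g) = E[1{g=1}(1−η) + 1{g=0}η]` is the risk. -/
theorem tsybakov_disagreement_bound {X : Type*} [MeasurableSpace X]
    (μ : Measure X) [IsProbabilityMeasure μ]
    (η : X → ℝ) (hη : Measurable η) (hη01 : ∀ x, η x ∈ Set.Icc (0 : ℝ) 1)
    (a B : ℝ) (ha : a ∈ Set.Ioo (0 : ℝ) 1) (hB : 0 < B)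
    (htsy : ∀ t : ℝ, 0 ≤ t →
      (μ {x | |η x - 1 / 2| < 2 * t}).toReal ≤ B * t ^ (a / (1 - a)))
    (g : X → Bool) (hg : Measurable g) :
    (μ {x | ¬(g x = true ↔ (1 / 2 : ℝ) ≤ η x)}).toReal ≤
      (B ^ (1 - a) / ((1 - a) ^ (1 - a) * a ^ a)) *
        ((∫ x, (if g x then 1 - η x else η x) ∂μ) -
          (∫ x, (if (1 / 2 : ℝ) ≤ η x then 1 - η x else η x) ∂μ)) ^ a := by
  classical
  obtain ⟨ha0, ha1⟩ := ha
  have ha1' : (0:ℝ) < 1 - a := by linarith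
  set D : Set X := {x | ¬(g x = true ↔ (1 / 2 : ℝ) ≤ η x)} with hD
  have hmeasD : MeasurableSet D := by
    have : D = (g ⁻¹' {true} ∩ η ⁻¹' (Set.Iio (1/2))) ∪
        (g ⁻¹' {false} ∩ η ⁻¹' (Set.Ici (1/2))) := by
      ext x
      by_cases hgx : g x <;> by_cases hx : (1/2:ℝ) ≤ η x <;>
        simp [hD, hgx, hx, not_le.mpr, lt_of_not_ge]
    rw [this]
    exact ((hg (measurableSet_singleton true)).inter (hη measurableSet_Iio)).union
      ((hg (measurableSet_singleton false)).inter (hη measurableSet_Ici))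
  set f : X → ℝ := fun x => |2 * η x - 1| with hf
  have hfm : Measurable f := (((measurable_const.mul hη)).sub measurable_const).abs
  have hfnn : ∀ x, 0 ≤ f x := fun x => abs_nonneg _
  have hf1 : ∀ x, f x ≤ 1 := by
    intro x
    obtain ⟨h0, h1⟩ := hη01 x
    rw [hf, abs_le]; constructor <;> simp <;> linarith
  have hint : Integrable f μ := by
    refine (integrable_const (1:ℝ)).mono' hfm.aestronglyMeasurable ?_
    filter_upwards with x
    rw [Real.norm_eq_abs, abs_abs]
    exact hf1 x
  set E := ∫ x in D, f x ∂μ with hE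
  have hEnn : 0 ≤ E := setIntegral_nonneg hmeasD (fun x _ => hfnn x)
  -- The excess risk equals the integral of |2η−1| over the disagreement set D.
  have hdiff : (∫ x, (if g x then 1 - η x else η x) ∂μ) -
      (∫ x, (if (1 / 2 : ℝ) ≤ η x then 1 - η x else η x) ∂μ) = E := by
    have hbnd : ∀ (c : X → ℝ), Measurable c → (∀ x, |c x| ≤ 1) → Integrable c μ := by
      intro c hc hc1
      refine (integrable_const (1:ℝ)).mono' hc.aestronglyMeasurable ?_
      filter_upwards with x; simpa using hc1 x
    have h1 : Integrable (fun x => if g x then 1 - η x else η x) μ := by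
      refine hbnd _ ?_ ?_
      · exact Measurable.ite (hg (measurableSet_singleton true)) (measurable_const.sub hη) hη
      · intro x; obtain ⟨h0, h1⟩ := hη01 x
        rw [abs_le]; split_ifs <;> constructor <;> linarith
    have h2 : Integrable (fun x => if (1/2:ℝ) ≤ η x then 1 - η x else η x) μ := by
      refine hbnd _ ?_ ?_
      · exact Measurable.ite (hη measurableSet_Ici) (measurable_const.sub hη) hη
      · intro x; obtain ⟨h0, h1⟩ := hη01 x
        rw [abs_le]; split_ifs <;> constructor <;> linarith
    rw [hE, ← integral_sub h1 h2, ← integral_indicator hmeasD]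
    congr 1
    funext x
    have hmem : x ∈ D ↔ ¬(g x = true ↔ (1/2:ℝ) ≤ η x) := by rw [hD]; rfl
    by_cases hgx : g x = true <;> by_cases hx : (1/2:ℝ) ≤ η x
    · have hxD : x ∉ D := by rw [hmem]; push_neg; exact iff_of_true hgx hx
      rw [Set.indicator_of_notMem hxD, if_pos hgx, if_pos hx]; ring
    · have hxD : x ∈ D := by rw [hmem]; intro h; exact hx (h.mp hgx)
      rw [Set.indicator_of_mem hxD, if_pos hgx, if_neg hx]
      simp only [hf]
      rw [abs_of_nonpos (by linarith [lt_of_not_ge hx])]; ring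
    · have hxD : x ∈ D := by rw [hmem]; intro h; exact hgx (h.mpr hx)
      rw [Set.indicator_of_mem hxD, if_neg hgx, if_pos hx]
      simp only [hf]
      rw [abs_of_nonneg (by linarith)]; ring
    · have hxD : x ∉ D := by
        rw [hmem]; push_neg; exact ⟨fun h => absurd h hgx, fun h => absurd h hx⟩
      rw [Set.indicator_of_notMem hxD, if_neg hgx, if_neg hx]; ring
  rw [hdiff]
  -- Key estimate: for every t > 0, μ(D) ≤ B t^{a/(1-a)} + E/(4t).
  have key : ∀ t : ℝ, 0 < t → (μ D).toReal ≤ B * t ^ (a / (1 - a)) + E / (4 * t) := by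
    intro t ht
    set A := D ∩ {x | 2 * t ≤ |η x - 1 / 2|} with hA
    have hmA : MeasurableSet A :=
      hmeasD.inter (measurableSet_le measurable_const (hη.sub measurable_const).abs)
    have hsub : D ⊆ {x | |η x - 1 / 2| < 2 * t} ∪ A := by
      intro x hx
      by_cases h : |η x - 1 / 2| < 2 * t
      · exact Or.inl h
      · exact Or.inr ⟨hx, le_of_not_gt h⟩
    have h1 : (μ D).toReal ≤ (μ {x | |η x - 1 / 2| < 2 * t}).toReal + (μ A).toReal := by
      rw [← ENNReal.toReal_add (measure_ne_top μ _) (measure_ne_top μ _)]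
      exact ENNReal.toReal_mono
        (ENNReal.add_ne_top.mpr ⟨measure_ne_top μ _, measure_ne_top μ _⟩)
        ((measure_mono hsub).trans (measure_union_le _ _))
    have h2 : (4 * t) * (μ A).toReal ≤ E := by
      have hc : ∫ x in A, (4 * t) ∂μ ≤ ∫ x in A, f x ∂μ := by
        refine setIntegral_mono_on (integrableOn_const (measure_lt_top μ A).ne)
          hint.integrableOn hmA ?_
        intro x hx
        have h2t : 2 * t ≤ |η x - 1 / 2| := hx.2
        have : f x = 2 * |η x - 1 / 2| := by
          rw [hf]
          simp only
          rw [show 2 * η x - 1 = 2 * (η x - 1 / 2) by ring, abs_mul, abs_two]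
        rw [this]; linarith
      have hc2 : ∫ x in A, f x ∂μ ≤ E := by
        rw [hE]
        exact setIntegral_mono_set hint.integrableOn
          (Filter.Eventually.of_forall fun x => hfnn x)
          (HasSubset.Subset.eventuallyLE Set.inter_subset_left)
      rw [setIntegral_const] at hc
      calc (4 * t) * (μ A).toReal = (μ A).toReal • (4 * t) := by
            rw [smul_eq_mul]; ring
        _ ≤ E := hc.trans hc2
    have h3 : (μ A).toReal ≤ E / (4 * t) := by
      rw [le_div_iff₀ (by linarith)]
      linarith
    exact h1.trans (add_le_add (htsy t ht.le) h3)
  rcases eq_or_lt_of_le hEnn with hE0 | hEpos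
  · -- degenerate case: zero excess risk
    rw [← hE0, Real.zero_rpow (ne_of_gt ha0), mul_zero]
    rw [← hE0] at key
    refine le_of_forall_pos_le_add (fun ε hε => ?_)
    have hc : 0 < ε / (2 * B) := div_pos hε (by linarith)
    have ht : 0 < (ε / (2 * B)) ^ ((1 - a) / a) := Real.rpow_pos_of_pos hc _
    refine (key _ ht).trans ?_
    rw [zero_div, add_zero, ← Real.rpow_mul hc.le]
    have : (1 - a) / a * (a / (1 - a)) = 1 := by
      field_simp [ne_of_gt ha0, ne_of_gt ha1']
    rw [this, Real.rpow_one, zero_add, mul_div_assoc', mul_comm, mul_div_assoc]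
    have : B / (2 * B) = 1 / 2 := by
      field_simp [ne_of_gt hB]
    rw [this]
    linarith
  · -- main case: choose the (near-)optimal t
    set q : ℝ := a / (1 - a) with hqdef
    have hq : 0 < q := div_pos ha0 ha1'
    set r : ℝ := E / (q * B) with hrdef
    have hr : 0 < r := div_pos hEpos (mul_pos hq hB)
    set t : ℝ := r ^ (1 - a) with htdef
    have ht : 0 < t := Real.rpow_pos_of_pos hr _
    refine (key t ht).trans ?_
    set S : ℝ := B ^ (1 - a) * E ^ a with hSdef
    have hS : 0 < S := mul_pos (Real.rpow_pos_of_pos hB _) (Real.rpow_pos_of_pos hEpos _)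
    set P : ℝ := q ^ a with hPdef
    have hP : 0 < P := Real.rpow_pos_of_pos hq _
    set Q : ℝ := q ^ (1 - a) with hQdef
    have hQ : 0 < Q := Real.rpow_pos_of_pos hq _
    have hQP : Q * P = q := by
      rw [hQdef, hPdef, ← Real.rpow_add hq, sub_add_cancel, Real.rpow_one]
    have e1 : B * t ^ (a / (1 - a)) = S / P := by
      rw [htdef, ← Real.rpow_mul hr.le]
      have : (1 - a) * (a / (1 - a)) = a := by field_simp
      rw [this, hrdef, Real.div_rpow hEpos.le (mul_pos hq hB).le,
        Real.mul_rpow hq.le hB.le, hSdef, hPdef]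
      have hBa : B ^ a ≠ 0 := ne_of_gt (Real.rpow_pos_of_pos hB _)
      have hBsplit : B = B ^ a * B ^ (1 - a) := by
        rw [← Real.rpow_add hB, add_sub_cancel, Real.rpow_one]
      field_simp
      linarith [hBsplit]
    have e2 : E / (4 * t) = S * Q / 4 := by
      have htr : t = r ^ (1 - a) := htdef
      have hrQ : r ^ (1 - a) = E ^ (1 - a) / (Q * B ^ (1 - a)) := by
        rw [hrdef, Real.div_rpow hEpos.le (mul_pos hq hB).le,
          Real.mul_rpow hq.le hB.le, hQdef]
      rw [htr, hrQ]
      have hEsplit : E = E ^ a * E ^ (1 - a) := by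
        rw [← Real.rpow_add hEpos, add_sub_cancel, Real.rpow_one]
      have h1 : E ^ (1 - a) ≠ 0 := ne_of_gt (Real.rpow_pos_of_pos hEpos _)
      have h2 : Q * B ^ (1 - a) ≠ 0 :=
        ne_of_gt (mul_pos hQ (Real.rpow_pos_of_pos hB _))
      rw [hSdef]
      field_simp
      nth_rewrite 1 [hEsplit]
      ring
    have e3 : (B ^ (1 - a) / ((1 - a) ^ (1 - a) * a ^ a)) * E ^ a = S / (P * (1 - a)) := by
      rw [hSdef, hPdef, hqdef, Real.div_rpow ha0.le ha1'.le]
      have h1 : (1 - a) ^ (1 - a) ≠ 0 := ne_of_gt (Real.rpow_pos_of_pos ha1' _)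
      have h2 : (a:ℝ) ^ a ≠ 0 := ne_of_gt (Real.rpow_pos_of_pos ha0 _)
      have h3 : (1 - a) ^ a ≠ 0 := ne_of_gt (Real.rpow_pos_of_pos ha1' _)
      have hsplit : (1 - a) ^ a * (1 - a) ^ (1 - a) = 1 - a := by
        rw [← Real.rpow_add ha1', add_sub_cancel, Real.rpow_one]
      field_simp
      linarith [hsplit]
    rw [e1, e2, e3]
    have hkey : 1 + q / 4 ≤ 1 / (1 - a) := by
      rw [le_div_iff₀ ha1', hqdef]
      have : a / (1 - a) * (1 - a) = a := by field_simp
      nlinarith [this]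
    calc S / P + S * Q / 4 = (S / P) * (1 + Q * P / 4) := by field_simp
      _ ≤ (S / P) * (1 / (1 - a)) := by
          refine mul_le_mul_of_nonneg_left ?_ (le_of_lt (div_pos hS hP))
          rw [hQP]; exact hkey
      _ = S / (P * (1 - a)) := by rw [div_mul_div_comm, mul_one]
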